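/- If A is a finite commutative ring and P a Boolean algebra, then the multiplication defined on generators by (X ⊗ a)(Y ⊗ b) = (X ∩ Y) ⊗ (ab) is well-defined and turns P(A) into a commutative ring with unit 1 ⊗ 1. -/

import Mathlib

/-! ## The abelian group `P(A)` associated to a Boolean algebra `P` and an
abelian group `A`, generated by symbols `X ⊗ a` subject to
`X ⊗ a + Y ⊗ b = (X \ Y) ⊗ a + (Y \ X) ⊗ b + (X ⊓ Y) ⊗ (a + b)`. -/

/-- The subgroup of relations defining `P(A)`. -/
def paRel (P A : Type) [BooleanAlgebra P] [AddCommGroup A] :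
    AddSubgroup (FreeAbelianGroup (P × A)) :=
  AddSubgroup.closure
    {z | ∃ (X Y : P) (a b : A),
      z = FreeAbelianGroup.of (X, a) + FreeAbelianGroup.of (Y, b)
        - (FreeAbelianGroup.of (X \ Y, a) + FreeAbelianGroup.of (Y \ X, b)
            + FreeAbelianGroup.of (X ⊓ Y, a + b))}

/-- The abelian group `P(A)`. -/
abbrev PA (P A : Type) [BooleanAlgebra P] [AddCommGroup A] : Type :=
  FreeAbelianGroup (P × A) ⧸ paRel P A

/-- The generator `X ⊗ a` of `P(A)`. -/
def tens {P A : Type} [BooleanAlgebra P] [AddCommGroup A] (X : P) (a : A) : PA P A :=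
  QuotientAddGroup.mk (FreeAbelianGroup.of (X, a))

section Aux
variable {P A : Type} [BooleanAlgebra P] [AddCommGroup A]

lemma PA.induction_on {C : PA P A → Prop} (x : PA P A) (C0 : C 0)
    (C1 : ∀ X a, C (tens X a)) (Cn : ∀ x, C x → C (-x))
    (Cp : ∀ x y, C x → C y → C (x + y)) : C x := by
  refine QuotientAddGroup.induction_on x (fun z => ?_)
  refine FreeAbelianGroup.induction_on z C0 (fun ⟨X, a⟩ => C1 X a) ?_ ?_
  · intro y h; exact Cn _ h
  · intro y z hy hz; exact Cp _ _ hy hz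

lemma tens_rel (X Y : P) (a b : A) :
    tens X a + tens Y b = tens (X \ Y) a + tens (Y \ X) b + tens (X ⊓ Y) (a + b) := by
  have h : (QuotientAddGroup.mk (FreeAbelianGroup.of (X, a) + FreeAbelianGroup.of (Y, b)) :
      PA P A) = QuotientAddGroup.mk (FreeAbelianGroup.of (X \ Y, a) +
        FreeAbelianGroup.of (Y \ X, b) + FreeAbelianGroup.of (X ⊓ Y, a + b)) :=
    QuotientAddGroup.eq_iff_sub_mem.mpr (AddSubgroup.subset_closure ⟨X, Y, a, b, by abel⟩)
  simpa [tens, QuotientAddGroup.mk_add] using h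

end Aux

section Mul
variable {P A : Type} [BooleanAlgebra P] [CommRing A]

lemma inf_sdiff_inf_right (X X' Y : P) : (X ⊓ Y) \ (X' ⊓ Y) = (X \ X') ⊓ Y := by
  rw [sdiff_eq, sdiff_eq, compl_inf, inf_sup_left]
  simp [inf_assoc, inf_left_comm, inf_comm]

/-- first-stage lift: for fixed `(Y, b)`. -/
def mulAux1 (Y : P) (b : A) : FreeAbelianGroup (P × A) →+ PA P A :=
  FreeAbelianGroup.lift (fun p => tens (p.1 ⊓ Y) (p.2 * b))

lemma mulAux1_ker (Y : P) (b : A) : paRel P A ≤ (mulAux1 Y b).ker := by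
  refine (AddSubgroup.closure_le _).2 ?_
  rintro z ⟨X, X', a, a', rfl⟩
  simp only [SetLike.mem_coe, AddMonoidHom.mem_ker, map_sub, map_add, mulAux1,
    FreeAbelianGroup.lift_apply_of]
  rw [sub_eq_zero, tens_rel (X ⊓ Y) (X' ⊓ Y), inf_sdiff_inf_right, inf_sdiff_inf_right,
    inf_inf_inf_comm, inf_idem, add_mul]

def mulAux2 (Y : P) (b : A) : PA P A →+ PA P A :=
  QuotientAddGroup.lift _ (mulAux1 Y b) (mulAux1_ker Y b)

lemma mulAux2_tens (Y : P) (b : A) (X : P) (a : A) :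
    mulAux2 Y b (tens X a) = tens (X ⊓ Y) (a * b) := rfl

def mulAux3 : FreeAbelianGroup (P × A) →+ (PA P A →+ PA P A) :=
  FreeAbelianGroup.lift (fun p => mulAux2 p.1 p.2)

lemma mulAux3_of (Y : P) (b : A) :
    mulAux3 (FreeAbelianGroup.of (Y, b)) = mulAux2 Y b :=
  FreeAbelianGroup.lift_apply_of _ _

lemma mulAux3_ker : paRel P A ≤ (mulAux3 (P := P) (A := A)).ker := by
  refine (AddSubgroup.closure_le _).2 ?_
  rintro z ⟨Y, Y', b, b', rfl⟩
  simp only [SetLike.mem_coe, AddMonoidHom.mem_ker, map_sub, map_add, mulAux3_of]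
  ext ⟨X, a⟩
  simp only [AddMonoidHom.coe_comp, Function.comp_apply, AddMonoidHom.sub_apply,
    AddMonoidHom.add_apply, AddMonoidHom.zero_comp, AddMonoidHom.zero_apply]
  rw [sub_eq_zero]
  have e1 : (X ⊓ Y) \ (X ⊓ Y') = X ⊓ (Y \ Y') := by
    rw [inf_comm X Y, inf_comm X Y', inf_sdiff_inf_right, inf_comm]
  have e2 : (X ⊓ Y') \ (X ⊓ Y) = X ⊓ (Y' \ Y) := by
    rw [inf_comm X Y, inf_comm X Y', inf_sdiff_inf_right, inf_comm]
  have e3 : (X ⊓ Y) ⊓ (X ⊓ Y') = X ⊓ (Y ⊓ Y') := by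
    rw [inf_inf_inf_comm, inf_idem]
  show tens (X ⊓ Y) (a * b) + tens (X ⊓ Y') (a * b') =
    tens (X ⊓ (Y \ Y')) (a * b) + tens (X ⊓ (Y' \ Y)) (a * b') +
      tens (X ⊓ (Y ⊓ Y')) (a * (b + b'))
  rw [tens_rel (X ⊓ Y) (X ⊓ Y'), e1, e2, e3, mul_add]

def mulHom : PA P A →+ (PA P A →+ PA P A) :=
  QuotientAddGroup.lift _ mulAux3 mulAux3_ker

lemma mulHom_tens (X Y : P) (a b : A) :
    mulHom (tens Y b) (tens X a) = tens (X ⊓ Y) (a * b) := by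
  show mulAux3 (FreeAbelianGroup.of (Y, b)) (tens X a) = _
  rw [mulAux3_of, mulAux2_tens]

end Mul

/-- If `A` is a finite commutative ring and `P` a Boolean
algebra, then the multiplication determined on generators by
`(X ⊗ a)(Y ⊗ b) = (X ⊓ Y) ⊗ (ab)` is well defined and turns the abelian group
`P(A)` into a commutative ring with unit `1 ⊗ 1 = ⊤ ⊗ 1`. -/
theorem pa_commRing_structure (P A : Type) [BooleanAlgebra P] [CommRing A] [Finite A] :
    ∃ mul : PA P A → PA P A → PA P A,
      (∀ (X Y : P) (a b : A), mul (tens X a) (tens Y b) = tens (X ⊓ Y) (a * b)) ∧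
      (∀ x y : PA P A, mul x y = mul y x) ∧
      (∀ x y z : PA P A, mul (mul x y) z = mul x (mul y z)) ∧
      (∀ x y z : PA P A, mul x (y + z) = mul x y + mul x z) ∧
      (∀ x y z : PA P A, mul (x + y) z = mul x z + mul y z) ∧
      (∀ x : PA P A, mul (tens ⊤ (1 : A)) x = x) := by
  refine ⟨fun x y => mulHom y x, fun X Y a b => mulHom_tens X Y a b, ?_, ?_, ?_, ?_, ?_⟩
  · -- commutativity
    intro x
    refine PA.induction_on (C := fun x => ∀ y, mulHom y x = mulHom x y) x ?_ ?_ ?_ ?_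
    · intro y; simp only [map_zero, AddMonoidHom.zero_apply]
    · intro X a y
      refine PA.induction_on
        (C := fun y => mulHom y (tens X a) = mulHom (tens X a) y) y ?_ ?_ ?_ ?_
      · simp only [map_zero, AddMonoidHom.zero_apply]
      · intro Y b; rw [mulHom_tens, mulHom_tens, inf_comm, mul_comm]
      · intro y h; simp only [map_neg, AddMonoidHom.neg_apply, h]
      · intro y z hy hz; simp only [map_add, AddMonoidHom.add_apply, hy, hz]
    · intro x h y; simp only [map_neg, AddMonoidHom.neg_apply, h y]
    · intro x x' hx hx' y
      simp only [map_add, AddMonoidHom.add_apply, hx y, hx' y]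
  · -- associativity
    intro x
    refine PA.induction_on
      (C := fun x => ∀ y z, mulHom z (mulHom y x) = mulHom (mulHom z y) x) x ?_ ?_ ?_ ?_
    · intro y z; simp only [map_zero, AddMonoidHom.zero_apply]
    · intro X a y
      refine PA.induction_on
        (C := fun y => ∀ z, mulHom z (mulHom y (tens X a)) = mulHom (mulHom z y) (tens X a))
        y ?_ ?_ ?_ ?_
      · intro z; simp only [map_zero, AddMonoidHom.zero_apply]
      · intro Y b z
        refine PA.induction_on
          (C := fun z => mulHom z (mulHom (tens Y b) (tens X a)) =
            mulHom (mulHom z (tens Y b)) (tens X a)) z ?_ ?_ ?_ ?_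
        · simp only [map_zero, AddMonoidHom.zero_apply]
        · intro Z c
          rw [mulHom_tens, mulHom_tens, mulHom_tens, mulHom_tens, inf_assoc, mul_assoc]
        · intro z h; simp only [map_neg, AddMonoidHom.neg_apply, h]
        · intro z z' hz hz'; simp only [map_add, AddMonoidHom.add_apply, hz, hz']
      · intro y h z; simp only [map_neg, AddMonoidHom.neg_apply, h z]
      · intro y y' hy hy' z
        simp only [map_add, AddMonoidHom.add_apply, hy z, hy' z]
    · intro x h y z; simp only [map_neg, AddMonoidHom.neg_apply, h y z]
    · intro x x' hx hx' y z
      simp only [map_add, AddMonoidHom.add_apply, hx y z, hx' y z]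
  · intro x y z; simp only [map_add, AddMonoidHom.add_apply]
  · intro x y z; simp only [map_add, AddMonoidHom.add_apply]
  · intro x
    refine PA.induction_on (C := fun x => mulHom x (tens ⊤ 1) = x) x ?_ ?_ ?_ ?_
    · simp only [map_zero, AddMonoidHom.zero_apply]
    · intro X a; rw [mulHom_tens, top_inf_eq, one_mul]
    · intro x h; simp only [map_neg, AddMonoidHom.neg_apply, h]
    · intro x y hx hy; simp only [map_add, AddMonoidHom.add_apply, hx, hy]
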